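/- For every M ≥ 3, the 4-regular graph C_M[2] admits a Hamiltonian factorization, i.e., its edge set can be partitioned into two Hamiltonian cycles (cycles of length 2M). -/

import Mathlib

/-- The graph `C_M[2]`: vertex set `ℤ_M × ℤ_2`, with `(i,x)` adjacent to `(j,y)`
iff `j = i ± 1 (mod M)`. -/
def CM2 (M : ℕ) : SimpleGraph (ZMod M × ZMod 2) :=
  SimpleGraph.fromRel (fun p q => p.1 + 1 = q.1)

/-- A Hamiltonian cycle factor: a connected 2-regular spanning subgraph,
i.e. a single cycle through all the vertices. -/
def IsHamiltonianCycleFactor {V : Type*} (H : SimpleGraph V) : Prop :=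
  (∀ v : V, (H.neighborSet v).ncard = 2) ∧ H.Connected

namespace Stmt11Aux

open SimpleGraph

/-! ### Nat-level combinatorics -/

/-- position of `(a,x)` along the zigzag Hamiltonian cycle of length `2M` -/
def PsiN (M av x : ℕ) : ℕ := if x = 0 then av else if av = 0 then M else 2*M - av

/-- successor relation on the cycle `Fin (2M)`, expressed on values -/
def SN (M u v : ℕ) : Prop := u = v + 1 ∨ (u = 0 ∧ v + 1 = 2*M)

/-- adjacency on the cycle of length `2M`, on values -/
def HN (M u v : ℕ) : Prop := SN M u v ∨ SN M v u

/-- adjacency of columns in `C_M`, on values -/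
def CN (M av bv : ℕ) : Prop :=
  (bv = av + 1 ∨ (av + 1 = M ∧ bv = 0)) ∨ (av = bv + 1 ∨ (bv + 1 = M ∧ av = 0))

/-- whether the fibre over column `av` gets swapped -/
def swp (av : ℕ) : Prop := av = 0 ∨ av % 2 = 1

instance (av : ℕ) : Decidable (swp av) := by unfold swp; infer_instance

/-- specification of `PsiN M av 1` -/
def PsiH1 (M av u : ℕ) : Prop := (av = 0 ∧ u = M) ∨ (av ≠ 0 ∧ u + av = 2*M)

theorem psiLt (M av x : ℕ) (hM : 1 ≤ M) (ha : av < M) : PsiN M av x < 2*M := by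
  unfold PsiN; split_ifs <;> omega

theorem psiInj (M av bv x y : ℕ) (hM : 1 ≤ M) (ha : av < M) (hb : bv < M)
    (hx : x < 2) (hy : y < 2) (h : PsiN M av x = PsiN M bv y) : av = bv ∧ x = y := by
  unfold PsiN at h; split_ifs at h <;> omega

theorem cnNe (M av bv : ℕ) (hM : 3 ≤ M) (ha : av < M) (hb : bv < M)
    (h : CN M av bv) : av ≠ bv := by
  unfold CN at h; omega

theorem hnCN (M av bv x y : ℕ) (hM : 3 ≤ M) (ha : av < M) (hb : bv < M)
    (h : HN M (PsiN M av x) (PsiN M bv y)) : CN M av bv := by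
  unfold HN SN PsiN at h; unfold CN
  split_ifs at h <;> omega

theorem CN_comm (M a b : ℕ) : CN M a b ↔ CN M b a := by unfold CN; tauto

theorem HN_comm (M u v : ℕ) : HN M u v ↔ HN M v u := or_comm

theorem psiSpec0 (M av : ℕ) : PsiN M av 0 = av := by simp [PsiN]

theorem psiSpec1 (M av : ℕ) (ha : av < M) : PsiH1 M av (PsiN M av 1) := by
  unfold PsiN PsiH1
  split_ifs <;> first | contradiction | omega

set_option maxHeartbeats 1000000 in
theorem key00 (M av bv u' v' : ℕ) (hM : 3 ≤ M) (ha : av < M) (hb : bv < M)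
    (hu' : (swp av ∧ PsiH1 M av u') ∨ (¬swp av ∧ u' = av))
    (hv' : (swp bv ∧ PsiH1 M bv v') ∨ (¬swp bv ∧ v' = bv)) :
    ((CN M av bv ∧ ¬ HN M av bv) ↔ HN M u' v') := by
  unfold CN HN SN PsiH1 swp at *
  rcases hu' with ⟨h1, h2 | h2⟩ | ⟨h1, h2⟩ <;>
    rcases hv' with ⟨h3, h4 | h4⟩ | ⟨h3, h4⟩ <;> omega

set_option maxHeartbeats 2000000 in
theorem key01 (M av bv v u' v' : ℕ) (hM : 3 ≤ M) (ha : av < M) (hb : bv < M)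
    (hv : PsiH1 M bv v)
    (hu' : (swp av ∧ PsiH1 M av u') ∨ (¬swp av ∧ u' = av))
    (hv' : (swp bv ∧ v' = bv) ∨ (¬swp bv ∧ PsiH1 M bv v')) :
    ((CN M av bv ∧ ¬ HN M av v) ↔ HN M u' v') := by
  unfold CN HN SN PsiH1 swp at *
  rcases hv with ⟨g1, g2⟩ | ⟨g1, g2⟩ <;>
    rcases hu' with ⟨h1, h2 | h2⟩ | ⟨h1, h2⟩ <;>
    rcases hv' with ⟨h3, h4⟩ | ⟨h3, h4 | h4⟩ <;> omega

set_option maxHeartbeats 4000000 in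
theorem key11 (M av bv u v u' v' : ℕ) (hM : 3 ≤ M) (ha : av < M) (hb : bv < M)
    (hu : PsiH1 M av u) (hv : PsiH1 M bv v)
    (hu' : (swp av ∧ u' = av) ∨ (¬swp av ∧ PsiH1 M av u'))
    (hv' : (swp bv ∧ v' = bv) ∨ (¬swp bv ∧ PsiH1 M bv v')) :
    ((CN M av bv ∧ ¬ HN M u v) ↔ HN M u' v') := by
  unfold CN HN SN PsiH1 swp at *
  rcases hu with ⟨f1, f2⟩ | ⟨f1, f2⟩ <;> rcases hv with ⟨g1, g2⟩ | ⟨g1, g2⟩ <;>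
    rcases hu' with ⟨h1, h2⟩ | ⟨h1, h2 | h2⟩ <;>
    rcases hv' with ⟨h3, h4⟩ | ⟨h3, h4 | h4⟩ <;> omega

/-! ### Generic cycle graph facts -/

theorem subValOne (n : ℕ) (hn : 3 ≤ n) (a b : Fin n) :
    ((a - b).val = 1) ↔ (a.val = b.val + 1 ∨ (a.val = 0 ∧ b.val + 1 = n)) := by
  have ha := a.isLt; have hb := b.isLt
  have hsub : (a - b).val = (n - b.val + a.val) % n := by
    rw [Fin.sub_def]
  rw [hsub]
  rcases Nat.lt_or_ge (n - b.val + a.val) n with h | h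
  · rw [Nat.mod_eq_of_lt h]; omega
  · have h2 : n - b.val + a.val - n < n := by omega
    rw [Nat.mod_eq_sub_mod h, Nat.mod_eq_of_lt h2]; omega

theorem cycle_adj_iff (n : ℕ) (hn : 3 ≤ n) (w z : Fin n) :
    (cycleGraph n).Adj w z ↔
      ((w.val = z.val + 1 ∨ (w.val = 0 ∧ z.val + 1 = n)) ∨
       (z.val = w.val + 1 ∨ (z.val = 0 ∧ w.val + 1 = n))) := by
  rw [SimpleGraph.cycleGraph_adj', subValOne n hn, subValOne n hn]

theorem hamCycle (n : ℕ) (hn : 3 ≤ n) : IsHamiltonianCycleFactor (cycleGraph n) := by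
  obtain ⟨k, rfl⟩ : ∃ k, n = k + 3 := ⟨n - 3, by omega⟩
  constructor
  · intro v
    have hd : (cycleGraph (k+3)).degree v = 2 := cycleGraph_degree_three_le
    rw [Set.ncard_eq_toFinset_card']
    exact hd
  · exact cycleGraph_connected

theorem hamIso {V W : Type*} {G : SimpleGraph V} {H : SimpleGraph W} (f : G ≃g H)
    (hH : IsHamiltonianCycleFactor H) : IsHamiltonianCycleFactor G := by
  refine ⟨fun v => ?_, f.connected_iff.mpr hH.2⟩
  have h1 := Nat.card_congr (f.mapNeighborSet v)
  rw [Nat.card_coe_set_eq, Nat.card_coe_set_eq] at h1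
  rw [h1, hH.1]

/-! ### The construction over `ZMod M` -/

section
variable (M : ℕ) [NeZero M]

/-- the swap indicator, as an element of `ZMod 2` -/
def gz (a : ZMod M) : ZMod 2 := if a = 0 then 1 else (a.val : ZMod 2)

/-- the fibrewise swap -/
def tauf (p : ZMod M × ZMod 2) : ZMod M × ZMod 2 := (p.1, p.2 + gz M p.1)

theorem tau_inv : Function.Involutive (tauf M) := by
  intro p
  have h2 : ∀ z w : ZMod 2, z + w + w = z := by decide
  show (p.1, p.2 + gz M p.1 + gz M p.1) = p
  rw [h2]

/-- the fibrewise swap as a permutation -/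
def tauE : Equiv.Perm (ZMod M × ZMod 2) := (tau_inv M).toPerm

/-- the parametrization of the zigzag cycle -/
def psiF (p : ZMod M × ZMod 2) : Fin (2*M) :=
  ⟨PsiN M p.1.val p.2.val, psiLt M _ _ (Nat.pos_of_ne_zero (NeZero.ne M)) (ZMod.val_lt p.1)⟩

theorem psiInjF (hM : 3 ≤ M) : Function.Injective (psiF M) := by
  intro p q h
  have h' : PsiN M p.1.val p.2.val = PsiN M q.1.val q.2.val := congrArg Fin.val h
  have h2 := psiInj M _ _ _ _ (by omega) (ZMod.val_lt p.1) (ZMod.val_lt q.1)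
    (ZMod.val_lt p.2) (ZMod.val_lt q.2) h'
  have e1 : p.1 = q.1 := ZMod.val_injective M h2.1
  have e2 : p.2 = q.2 := ZMod.val_injective 2 h2.2
  exact Prod.ext e1 e2

theorem psiBij (hM : 3 ≤ M) : Function.Bijective (psiF M) := by
  rw [Fintype.bijective_iff_injective_and_card]
  refine ⟨psiInjF M hM, ?_⟩
  rw [Fintype.card_prod, ZMod.card, ZMod.card, Fintype.card_fin]
  ring

/-- the parametrization as an equivalence -/
noncomputable def eE (hM : 3 ≤ M) : (ZMod M × ZMod 2) ≃ Fin (2*M) :=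
  Equiv.ofBijective _ (psiBij M hM)

/-- the first Hamiltonian cycle -/
noncomputable def H1 (hM : 3 ≤ M) : SimpleGraph (ZMod M × ZMod 2) :=
  (cycleGraph (2*M)).comap (eE M hM).toEmbedding

theorem H1_adj (hM : 3 ≤ M) (p q : ZMod M × ZMod 2) :
    (H1 M hM).Adj p q ↔ HN M (PsiN M p.1.val p.2.val) (PsiN M q.1.val q.2.val) := by
  show (cycleGraph (2*M)).Adj (psiF M p) (psiF M q) ↔ _
  rw [cycle_adj_iff (2*M) (by omega)]
  exact Iff.rfl

theorem zsucc (hM : 3 ≤ M) (a b : ZMod M) :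
    (b = a + 1) ↔ (b.val = a.val + 1 ∨ (a.val + 1 = M ∧ b.val = 0)) := by
  haveI : Fact (1 < M) := ⟨by omega⟩
  have hval : (a + 1).val = (a.val + 1) % M := by rw [ZMod.val_add, ZMod.val_one]
  have hma := ZMod.val_lt a; have hmb := ZMod.val_lt b
  constructor
  · rintro rfl
    rw [hval]
    rcases eq_or_ne (a.val + 1) M with h | h
    · right; refine ⟨h, ?_⟩; rw [h, Nat.mod_self]
    · left; rw [Nat.mod_eq_of_lt (by omega)]
  · intro h
    apply ZMod.val_injective
    rw [hval]
    rcases h with h | ⟨h1, h2⟩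
    · rw [Nat.mod_eq_of_lt (by omega), h]
    · rw [h2, h1, Nat.mod_self]

theorem cm2_adj (hM : 3 ≤ M) (p q : ZMod M × ZMod 2) :
    (CM2 M).Adj p q ↔ CN M p.1.val q.1.val := by
  rw [CM2, SimpleGraph.fromRel_adj]
  constructor
  · rintro ⟨hne, h | h⟩
    · exact Or.inl ((zsucc M hM _ _).mp h.symm)
    · exact Or.inr ((zsucc M hM _ _).mp h.symm)
  · intro h
    have hne : p.1.val ≠ q.1.val :=
      cnNe M _ _ hM (ZMod.val_lt p.1) (ZMod.val_lt q.1) h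
    refine ⟨fun he => hne (congrArg (fun r => r.1.val) he), ?_⟩
    rcases h with h | h
    · exact Or.inl ((zsucc M hM _ _).mpr h).symm
    · exact Or.inr ((zsucc M hM _ _).mpr h).symm

theorem h1_le (hM : 3 ≤ M) : H1 M hM ≤ CM2 M := by
  intro p q h
  rw [H1_adj M hM] at h
  rw [cm2_adj M hM]
  exact hnCN M _ _ _ _ hM (ZMod.val_lt p.1) (ZMod.val_lt q.1) h

theorem gval (a : ZMod M) : (gz M a).val = if a.val = 0 then 1 else a.val % 2 := by
  rcases eq_or_ne a 0 with rfl | h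
  · have h0 : (0 : ZMod M).val = 0 := ZMod.val_zero
    rw [gz, if_pos rfl, h0, if_pos rfl]
    rfl
  · have h0 : ¬ (a.val = 0) := fun hh => h ((ZMod.val_eq_zero a).mp hh)
    rw [gz, if_neg h, if_neg h0]
    exact ZMod.val_natCast _ _

theorem bridge0 (a : ZMod M) :
    (swp a.val ∧ PsiH1 M a.val (PsiN M a.val (((0:ZMod 2) + gz M a).val))) ∨
    (¬swp a.val ∧ PsiN M a.val (((0:ZMod 2) + gz M a).val) = a.val) := by
  by_cases hs : swp a.val
  · have ht : ((0:ZMod 2) + gz M a).val = 1 := by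
      rw [zero_add, gval]
      unfold swp at hs; split_ifs <;> omega
    left; rw [ht]; exact ⟨hs, psiSpec1 M a.val (ZMod.val_lt a)⟩
  · have ht : ((0:ZMod 2) + gz M a).val = 0 := by
      rw [zero_add, gval]
      unfold swp at hs; split_ifs <;> omega
    right; rw [ht, psiSpec0]; exact ⟨hs, rfl⟩

theorem bridge1 (a : ZMod M) :
    (swp a.val ∧ PsiN M a.val (((1:ZMod 2) + gz M a).val) = a.val) ∨
    (¬swp a.val ∧ PsiH1 M a.val (PsiN M a.val (((1:ZMod 2) + gz M a).val))) := by
  have hadd : ((1:ZMod 2) + gz M a).val = (1 + (gz M a).val) % 2 := by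
    rw [ZMod.val_add]; rfl
  by_cases hs : swp a.val
  · have ht : ((1:ZMod 2) + gz M a).val = 0 := by
      rw [hadd, gval]
      unfold swp at hs; split_ifs <;> omega
    left; rw [ht, psiSpec0]; exact ⟨hs, rfl⟩
  · have ht : ((1:ZMod 2) + gz M a).val = 1 := by
      rw [hadd, gval]
      unfold swp at hs; split_ifs <;> omega
    right; rw [ht]; exact ⟨hs, psiSpec1 M a.val (ZMod.val_lt a)⟩

theorem sdiff_eq (hM : 3 ≤ M) :
    CM2 M \ H1 M hM = (H1 M hM).comap (tauE M).toEmbedding := by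
  ext p q
  rw [SimpleGraph.sdiff_adj, SimpleGraph.comap_adj]
  show _ ↔ (H1 M hM).Adj (tauf M p) (tauf M q)
  rw [cm2_adj M hM, H1_adj M hM, H1_adj M hM]
  obtain ⟨a, x⟩ := p; obtain ⟨b, y⟩ := q
  show (CN M a.val b.val ∧ ¬ HN M (PsiN M a.val x.val) (PsiN M b.val y.val)) ↔
    HN M (PsiN M a.val ((x + gz M a).val)) (PsiN M b.val ((y + gz M b).val))
  have hx : x = 0 ∨ x = 1 := by revert x; decide
  have hy : y = 0 ∨ y = 1 := by revert y; decide
  have ha := ZMod.val_lt a; have hb := ZMod.val_lt b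
  have hz : (0 : ZMod 2).val = 0 := rfl
  have ho : (1 : ZMod 2).val = 1 := rfl
  rcases hx with rfl | rfl <;> rcases hy with rfl | rfl <;> (try rw [hz]) <;> (try rw [ho])
  · rw [psiSpec0, psiSpec0]
    exact key00 M a.val b.val _ _ hM ha hb (bridge0 M a) (bridge0 M b)
  · rw [psiSpec0]
    exact key01 M a.val b.val _ _ _ hM ha hb (psiSpec1 M b.val (ZMod.val_lt b)) (bridge0 M a) (bridge1 M b)
  · rw [psiSpec0]
    rw [CN_comm, HN_comm M (PsiN M a.val 1) b.val,
      HN_comm M (PsiN M a.val ((1 + gz M a).val)) (PsiN M b.val ((0 + gz M b).val))]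
    exact key01 M b.val a.val _ _ _ hM hb ha (psiSpec1 M a.val (ZMod.val_lt a)) (bridge0 M b) (bridge1 M a)
  · exact key11 M a.val b.val _ _ _ _ hM ha hb (psiSpec1 M a.val (ZMod.val_lt a)) (psiSpec1 M b.val (ZMod.val_lt b))
      (bridge1 M a) (bridge1 M b)

noncomputable def iso2 (hM : 3 ≤ M) : (CM2 M \ H1 M hM) ≃g H1 M hM := by
  rw [sdiff_eq M hM]
  exact SimpleGraph.Iso.comap (tauE M) (H1 M hM)

end

end Stmt11Aux

/-- For every `M ≥ 3`, the 4-regular graph `C_M[2]` has a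
Hamiltonian factorization: its edge set partitions into two Hamiltonian cycles. -/
theorem stmt_11 (M : ℕ) (hM : 3 ≤ M) :
    ∃ H₁ H₂ : SimpleGraph (ZMod M × ZMod 2),
      IsHamiltonianCycleFactor H₁ ∧ IsHamiltonianCycleFactor H₂ ∧
      Disjoint H₁.edgeSet H₂.edgeSet ∧
      H₁.edgeSet ∪ H₂.edgeSet = (CM2 M).edgeSet := by
  haveI : NeZero M := ⟨by omega⟩
  refine ⟨Stmt11Aux.H1 M hM, CM2 M \ Stmt11Aux.H1 M hM, ?_, ?_, ?_, ?_⟩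
  · exact Stmt11Aux.hamIso (SimpleGraph.Iso.comap (Stmt11Aux.eE M hM) _)
      (Stmt11Aux.hamCycle (2*M) (by omega))
  · exact Stmt11Aux.hamIso (Stmt11Aux.iso2 M hM)
      (Stmt11Aux.hamIso (SimpleGraph.Iso.comap (Stmt11Aux.eE M hM) _)
        (Stmt11Aux.hamCycle (2*M) (by omega)))
  · rw [SimpleGraph.edgeSet_sdiff]
    exact Set.disjoint_sdiff_right
  · rw [SimpleGraph.edgeSet_sdiff]
    exact Set.union_diff_cancel (SimpleGraph.edgeSet_mono (Stmt11Aux.h1_le M hM))
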